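/- For any patient i and any epoch t with 1 < t ≤ T, the difference in expected total risk reduction satisfies a_{i,t-1} - a_{i,t} = r · y_{i,t-1} · (CVD_i - a_{i,t}), where a_{i,t} = CVD_i - q · Σ_{τ=0}^{T-t+1} P_{i,t,τ} · (1-r)^τ · CVD_i. -/

import Mathlib

/-- Probability of exactly `τ` non-adherent epochs among epochs `t, …, T`. -/
noncomputable def nonAdhereProb (T : ℕ) (y : ℕ → ℝ) (t τ : ℕ) : ℝ :=
  ∑ A ∈ (Finset.Icc t T).powersetCard τ,
    (∏ s ∈ A, y s) * ∏ s ∈ (Finset.Icc t T) \ A, (1 - y s)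

/-- Expected total risk reduction if the patient is intervened at epoch `t`:
`a t = CVD - q · Σ_{τ=0}^{T-t+1} P_{t,τ} (1-r)^τ CVD`. -/
noncomputable def riskRed (T : ℕ) (y : ℕ → ℝ) (CVD q r : ℝ) (t : ℕ) : ℝ :=
  CVD - q * ∑ τ ∈ Finset.range (T - t + 2), nonAdhereProb T y t τ * (1 - r) ^ τ * CVD

lemma genfun (T : ℕ) (y : ℕ → ℝ) (x : ℝ) (u : ℕ) (hu : u ≤ T) :
    ∑ τ ∈ Finset.range (T - u + 2), nonAdhereProb T y u τ * x ^ τ =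
      ∏ s ∈ Finset.Icc u T, (x * y s + (1 - y s)) := by
  have hcard : (Finset.Icc u T).card = T - u + 1 := by
    rw [Nat.card_Icc]; omega
  rw [Finset.prod_add, Finset.sum_powerset, hcard]
  have : T - u + 2 = T - u + 1 + 1 := rfl
  rw [this]
  refine Finset.sum_congr rfl fun τ _ => ?_
  rw [nonAdhereProb, Finset.sum_mul]
  refine Finset.sum_congr rfl fun A hA => ?_
  have hAcard : A.card = τ := (Finset.mem_powersetCard.mp hA).2
  rw [Finset.prod_mul_distrib, Finset.prod_const, hAcard]
  ring

theorem stmt3 (T : ℕ) (y : ℕ → ℝ) (hy : ∀ s, 0 ≤ y s ∧ y s ≤ 1)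
    (CVD q r : ℝ) (hCVD : 0 ≤ CVD) (hq : 0 ≤ q ∧ q ≤ 1) (hr : 0 ≤ r ∧ r ≤ 1)
    (t : ℕ) (ht1 : 1 < t) (htT : t ≤ T) :
    riskRed T y CVD q r (t - 1) - riskRed T y CVD q r t =
      r * y (t - 1) * (CVD - riskRed T y CVD q r t) := by
  have h1 : t - 1 ≤ T := by omega
  have hins : Finset.Icc (t - 1) T = insert (t - 1) (Finset.Icc t T) := by
    ext s
    simp only [Finset.mem_Icc, Finset.mem_insert]
    omega
  have hnot : t - 1 ∉ Finset.Icc t T := by simp; omega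
  have S1 := genfun T y (1 - r) (t - 1) h1
  have S2 := genfun T y (1 - r) t htT
  have hprod : ∏ s ∈ Finset.Icc (t - 1) T, ((1 - r) * y s + (1 - y s)) =
      ((1 - r) * y (t - 1) + (1 - y (t - 1))) *
        ∏ s ∈ Finset.Icc t T, ((1 - r) * y s + (1 - y s)) := by
    rw [hins, Finset.prod_insert hnot]
  simp only [riskRed]
  have e1 : ∀ u : ℕ, ∑ τ ∈ Finset.range (T - u + 2), nonAdhereProb T y u τ * (1 - r) ^ τ * CVD
      = (∑ τ ∈ Finset.range (T - u + 2), nonAdhereProb T y u τ * (1 - r) ^ τ) * CVD := by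
    intro u; rw [Finset.sum_mul]
  rw [e1 (t - 1), e1 t, S1, S2, hprod]
  ring
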